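/- arXiv:2202.06156 — 5 statements merged into one kernel-verified Lean document; each statement's English description precedes it below -/
import Mathlib

section
/- For 0 < α, β < 1, n ≥ 2, and 1 ≤ i ≤ n−1, the coefficients satisfy c_{n,i} < c_{n−1,i}, where c_{n,i} := (1/(β Γ(β))) · ((1 − ((i−1)/n)^{α/β})^β − (1 − (i/n)^{α/β})^β). -/
/-- Rectangle-rule discretization weights of the Erdélyi–Kober integral. -/
noncomputable def c (α β : ℝ) (n i : ℕ) : ℝ :=
  (1 / (β * Real.Gamma β)) *
    ((1 - (((i : ℝ) - 1) / n) ^ (α / β)) ^ β - (1 - ((i : ℝ) / n) ^ (α / β)) ^ β)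

lemma aux_hasDerivAt (γ β : ℝ) (hγ : 0 < γ) (m t : ℝ) (hm : 0 ≤ m) (ht : 0 < t)
    (hmt : m * t < 1) :
    HasDerivAt (fun s : ℝ => (1 - (m * s) ^ γ) ^ β)
      (-(β * γ / t) * ((m * t) ^ γ * (1 - (m * t) ^ γ) ^ (β - 1))) t := by
  rcases eq_or_lt_of_le hm with h0 | h0
  · have hfun : (fun s : ℝ => (1 - (m * s) ^ γ) ^ β) = fun _ => (1 : ℝ) ^ β := by
      funext s; rw [← h0, zero_mul, Real.zero_rpow hγ.ne', sub_zero]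
    rw [hfun, ← h0, zero_mul, Real.zero_rpow hγ.ne', zero_mul, mul_zero]
    exact hasDerivAt_const t _
  · have hmt0 : 0 < m * t := mul_pos h0 ht
    have h1 : HasDerivAt (fun s : ℝ => m * s) m t := by
      simpa using (hasDerivAt_id t).const_mul m
    have h2 : HasDerivAt (fun x : ℝ => x ^ γ) (γ * (m * t) ^ (γ - 1)) (m * t) :=
      Real.hasDerivAt_rpow_const (Or.inl hmt0.ne')
    have h3 : HasDerivAt (fun s : ℝ => (m * s) ^ γ) (γ * (m * t) ^ (γ - 1) * m) t :=
      h2.comp t h1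
    have h4 : HasDerivAt (fun s : ℝ => 1 - (m * s) ^ γ) (-(γ * (m * t) ^ (γ - 1) * m)) t :=
      h3.const_sub 1
    have hlt1 : (m * t) ^ γ < 1 := Real.rpow_lt_one hmt0.le hmt hγ
    have hne : (1 : ℝ) - (m * t) ^ γ ≠ 0 := by
      have : (0:ℝ) < 1 - (m * t) ^ γ := by linarith
      exact this.ne'
    have h5 := h4.rpow_const (p := β) (Or.inl hne)
    convert h5 using 1
    rw [Real.rpow_sub_one hmt0.ne' γ]
    field_simp

lemma aux_key (α β : ℝ) (hα : 0 < α) (hβ : 0 < β) (hβ1 : β < 1)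
    (m a b : ℝ) (hm : 1 ≤ m) (ha : 0 < a) (hab : a < b) (hb : m * b ≤ 1) :
    (1 - ((m - 1) * a) ^ (α / β)) ^ β - (1 - (m * a) ^ (α / β)) ^ β <
      (1 - ((m - 1) * b) ^ (α / β)) ^ β - (1 - (m * b) ^ (α / β)) ^ β := by
  set γ := α / β with hγdef
  have hγ : 0 < γ := div_pos hα hβ
  set g : ℝ → ℝ := fun s => (1 - ((m - 1) * s) ^ γ) ^ β - (1 - (m * s) ^ γ) ^ β with hg
  have hm1 : 0 ≤ m - 1 := by linarith
  have hm0 : (0:ℝ) < m := by linarith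
  -- continuity
  have hc : ∀ p : ℝ, Continuous (fun s : ℝ => (1 - (p * s) ^ γ) ^ β) := by
    intro p
    rw [continuous_iff_continuousAt]
    intro s
    exact (continuousAt_const.sub ((continuousAt_const.mul continuousAt_id).rpow_const
      (Or.inr hγ.le))).rpow_const (Or.inr hβ.le)
  have hgc : ContinuousOn g (Set.Icc a b) := (((hc (m-1)).sub (hc m))).continuousOn
  -- derivative positivity on the interior
  have hmono : StrictMonoOn g (Set.Icc a b) := by
    apply strictMonoOn_of_deriv_pos (convex_Icc a b) hgc
    intro x hx
    rw [interior_Icc] at hx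
    obtain ⟨hxa, hxb⟩ := hx
    have hx0 : 0 < x := lt_trans ha hxa
    have hvx : m * x < 1 := lt_of_lt_of_le (by nlinarith) hb
    have hux : (m - 1) * x < 1 := by nlinarith
    have hd1 := aux_hasDerivAt γ β hγ (m - 1) x hm1 hx0 hux
    have hd2 := aux_hasDerivAt γ β hγ m x (by linarith) hx0 hvx
    have hd := (hd1.sub hd2).deriv
    rw [hg, show (fun s => (1 - ((m - 1) * s) ^ γ) ^ β - (1 - (m * s) ^ γ) ^ β) = ((fun s => (1 - ((m - 1) * s) ^ γ) ^ β) - fun s => (1 - (m * s) ^ γ) ^ β) from rfl, hd]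
    set u := (m - 1) * x with hu
    set v := m * x with hv
    have huv : u < v := by nlinarith
    have hu0 : 0 ≤ u := mul_nonneg hm1 hx0.le
    have hv0 : 0 < v := mul_pos hm0 hx0
    have h1 : u ^ γ < v ^ γ := Real.rpow_lt_rpow hu0 huv hγ
    have h2 : v ^ γ < 1 := Real.rpow_lt_one hv0.le hvx hγ
    have h3 : (0:ℝ) < 1 - v ^ γ := by linarith
    have h4 : (0:ℝ) < 1 - u ^ γ := by
      have : (0:ℝ) ≤ u ^ γ := Real.rpow_nonneg hu0 γ
      linarith
    have hAB : (1 - u ^ γ) ^ (β - 1) ≤ (1 - v ^ γ) ^ (β - 1) :=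
      Real.rpow_le_rpow_of_nonpos h3 (by linarith) (by linarith)
    have hApos : (0:ℝ) < (1 - u ^ γ) ^ (β - 1) := Real.rpow_pos_of_pos h4 _
    have hG : u ^ γ * (1 - u ^ γ) ^ (β - 1) < v ^ γ * (1 - v ^ γ) ^ (β - 1) := by
      calc u ^ γ * (1 - u ^ γ) ^ (β - 1) < v ^ γ * (1 - u ^ γ) ^ (β - 1) := by
            exact mul_lt_mul_of_pos_right h1 hApos
        _ ≤ v ^ γ * (1 - v ^ γ) ^ (β - 1) := by
            apply mul_le_mul_of_nonneg_left hAB (Real.rpow_nonneg (by positivity) γ)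
    have hc0 : (0:ℝ) < β * γ / x := by positivity
    nlinarith [mul_pos hc0 (sub_pos.mpr hG)]
  have := hmono (Set.left_mem_Icc.mpr hab.le) (Set.right_mem_Icc.mpr hab.le) hab
  simpa [hg] using this

theorem stmt_3 (α β : ℝ) (hα : 0 < α) (hα1 : α < 1) (hβ : 0 < β) (hβ1 : β < 1)
    (n i : ℕ) (hn : 2 ≤ n) (hi1 : 1 ≤ i) (hin : i ≤ n - 1) :
    c α β n i < c α β (n - 1) i := by
  have hn1 : 1 ≤ n := le_trans one_le_two hn
  have hcast : ((n - 1 : ℕ) : ℝ) = (n : ℝ) - 1 := by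
    push_cast [Nat.cast_sub hn1]
    ring
  have h2 : (2:ℝ) ≤ (n:ℝ) := by exact_mod_cast hn
  have hi : (1:ℝ) ≤ (i:ℝ) := by exact_mod_cast hi1
  have hin' : (i:ℝ) ≤ (n:ℝ) - 1 := by
    have h := (Nat.cast_le (α := ℝ)).mpr hin
    rwa [hcast] at h
  have hK : 0 < 1 / (β * Real.Gamma β) := by
    have := Real.Gamma_pos_of_pos hβ
    positivity
  unfold c
  rw [hcast]
  apply (mul_lt_mul_iff_right₀ hK).mpr
  have ha : (0:ℝ) < 1 / (n:ℝ) := by positivity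
  have hab : (1:ℝ) / (n:ℝ) < 1 / ((n:ℝ) - 1) := by
    apply one_div_lt_one_div_of_lt <;> linarith
  have hmb : (i:ℝ) * (1 / ((n:ℝ) - 1)) ≤ 1 := by
    rw [mul_one_div, div_le_one (by linarith)]
    linarith
  have hkey := aux_key α β hα hβ hβ1 (i:ℝ) (1/(n:ℝ)) (1/((n:ℝ)-1)) hi ha hab hmb
  rw [show ((i:ℝ)-1)/(n:ℝ) = ((i:ℝ)-1)*(1/(n:ℝ)) by ring,
    show (i:ℝ)/(n:ℝ) = (i:ℝ)*(1/(n:ℝ)) by ring,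
    show ((i:ℝ)-1)/((n:ℝ)-1) = ((i:ℝ)-1)*(1/((n:ℝ)-1)) by ring,
    show (i:ℝ)/((n:ℝ)-1) = (i:ℝ)*(1/((n:ℝ)-1)) by ring]
  exact hkey
end

section
/- Fix 0 < α, β < 1. For every n > 1 and every i ∈ {1,…,n−1}, (n + α)·c_{n,i} − n·c_{n−1,i} < 0, where c_{n,i} := (1/(β Γ(β))) · ((1 − ((i−1)/n)^{α/β})^β − (1 − (i/n)^{α/β})^β). -/
set_option maxHeartbeats 1000000 in
theorem stmt_4 (α β : ℝ) (hα : 0 < α) (hα1 : α < 1) (hβ : 0 < β) (hβ1 : β < 1)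
    (n i : ℕ) (hn : 1 < n) (hi1 : 1 ≤ i) (hin : i ≤ n - 1) :
    ((n : ℝ) + α) * c α β n i - (n : ℝ) * c α β (n - 1) i < 0 := by
  have hK : 0 < 1 / (β * Real.Gamma β) := by
    have := Real.Gamma_pos_of_pos hβ; positivity
  set p := α / β with hp
  have hp0 : 0 < p := div_pos hα hβ
  have hn2 : (2:ℝ) ≤ (n:ℝ) := by exact_mod_cast hn
  have hN0 : (0:ℝ) < (n:ℝ) := by linarith
  have hN1 : (0:ℝ) < (n:ℝ) - 1 := by linarith
  have hmcast : ((n-1:ℕ):ℝ) = (n:ℝ) - 1 := by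
    have h1n : 1 ≤ n := by omega
    push_cast [Nat.cast_sub h1n]; ring
  set l : ℝ := (n:ℝ) / ((n:ℝ) - 1) with hl
  have hl0 : 0 < l := by positivity
  have hl1 : 1 < l := (one_lt_div hN1).mpr (by linarith)
  -- key scalar inequality : n + α ≤ n * l ^ p
  have hkey : (n:ℝ) + α ≤ (n:ℝ) * l ^ p := by
    have hlog : 1 / (n:ℝ) ≤ Real.log l := by
      have h1 := Real.log_le_sub_one_of_pos (show (0:ℝ) < ((n:ℝ)-1)/(n:ℝ) by positivity)
      have hinv : Real.log (((n:ℝ)-1)/(n:ℝ)) = - Real.log l := by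
        rw [← Real.log_inv]; congr 1
        rw [hl]; field_simp
      have e : ((n:ℝ)-1)/(n:ℝ) - 1 = -(1/(n:ℝ)) := by field_simp; ring
      rw [hinv, e] at h1; linarith
    have h2 : l ^ (α:ℝ) = Real.exp (α * Real.log l) := by
      rw [Real.rpow_def_of_pos hl0, mul_comm]
    have h3 : 1 + α / (n:ℝ) ≤ Real.exp (α * Real.log l) := by
      have h4 : α / (n:ℝ) + 1 ≤ Real.exp (α / (n:ℝ)) := Real.add_one_le_exp _
      have h5 : Real.exp (α / (n:ℝ)) ≤ Real.exp (α * Real.log l) := by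
        apply Real.exp_le_exp.mpr
        have := mul_le_mul_of_nonneg_left hlog hα.le
        calc α / (n:ℝ) = α * (1/(n:ℝ)) := by ring
          _ ≤ α * Real.log l := this
      linarith
    have h6 : l ^ (α:ℝ) ≤ l ^ p := by
      apply (Real.rpow_le_rpow_left_iff hl1).mpr
      rw [hp, le_div_iff₀ hβ]; nlinarith
    have h7 : 1 + α / (n:ℝ) ≤ l ^ p := by rw [h2] at h6; linarith
    have h8 : (n:ℝ) * (1 + α / (n:ℝ)) ≤ (n:ℝ) * l ^ p :=
      mul_le_mul_of_nonneg_left h7 hN0.le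
    calc (n:ℝ) + α = (n:ℝ) * (1 + α / (n:ℝ)) := by field_simp
      _ ≤ (n:ℝ) * l ^ p := h8
  -- interval endpoints
  set a : ℝ := ((i:ℝ) - 1) / (n:ℝ) with ha
  set b : ℝ := (i:ℝ) / (n:ℝ) with hb
  have hi1' : (1:ℝ) ≤ (i:ℝ) := by exact_mod_cast hi1
  have hin' : (i:ℝ) ≤ (n:ℝ) - 1 := by
    have : (i:ℝ) ≤ ((n-1:ℕ):ℝ) := by exact_mod_cast hin
    rwa [hmcast] at this
  have hab : a < b := by
    rw [ha, hb, div_lt_div_iff₀ hN0 hN0]; nlinarith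
  have ha0 : 0 ≤ a := div_nonneg (by linarith) hN0.le
  have hlb1 : l * b ≤ 1 := by
    rw [hl, hb]; rw [div_mul_div_comm, div_le_one (by positivity)]; nlinarith
  -- the comparison function
  set D : ℝ → ℝ := fun τ => (n:ℝ) * (1 - (l*τ)^p)^β - ((n:ℝ)+α) * (1 - τ^p)^β with hD
  have hcont : Continuous D := by
    apply Continuous.sub
    · exact continuous_const.mul
        ((continuous_const.sub ((continuous_const.mul continuous_id).rpow_const
          (fun x => Or.inr hp0.le))).rpow_const (fun x => Or.inr hβ.le))
    · exact continuous_const.mul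
        ((continuous_const.sub (continuous_id.rpow_const
          (fun x => Or.inr hp0.le))).rpow_const (fun x => Or.inr hβ.le))
  have hderiv : ∀ τ ∈ interior (Set.Icc a b), deriv D τ < 0 := by
    intro τ hτ
    rw [interior_Icc] at hτ
    obtain ⟨hτa, hτb⟩ := hτ
    have hτ0 : 0 < τ := lt_of_le_of_lt ha0 hτa
    have hτlt : τ < l * τ := by nlinarith
    have hlτ1 : l * τ < 1 := lt_of_lt_of_le (by nlinarith) hlb1
    have hτ1 : τ < 1 := lt_trans hτlt hlτ1
    have hA0 : 0 < 1 - (l*τ)^p := by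
      have : (l*τ)^p < 1 ^ p := Real.rpow_lt_rpow (by positivity) hlτ1 hp0
      rw [Real.one_rpow] at this; linarith
    have hB0 : 0 < 1 - τ^p := by
      have : τ^p < 1 ^ p := Real.rpow_lt_rpow hτ0.le hτ1 hp0
      rw [Real.one_rpow] at this; linarith
    have hAB : 1 - (l*τ)^p < 1 - τ^p := by
      have : τ^p < (l*τ)^p := Real.rpow_lt_rpow hτ0.le hτlt hp0
      linarith
    have hlτ0 : 0 < l * τ := by positivity
    -- derivatives
    have hd1 : HasDerivAt (fun y : ℝ => (n:ℝ) * (1 - (l*y)^p)^β)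
        ((n:ℝ) * (-(l * 1 * p * (l*τ)^(p-1)) * β * (1 - (l*τ)^p)^(β-1))) τ :=
      (((((hasDerivAt_id τ).const_mul l).rpow_const
        (Or.inl hlτ0.ne')).const_sub 1).rpow_const (Or.inl hA0.ne')).const_mul (n:ℝ)
    have hd2 : HasDerivAt (fun y : ℝ => ((n:ℝ)+α) * (1 - y^p)^β)
        (((n:ℝ)+α) * (-(1 * p * τ^(p-1)) * β * (1 - τ^p)^(β-1))) τ :=
      ((((hasDerivAt_id τ).rpow_const
        (Or.inl hτ0.ne')).const_sub 1).rpow_const (Or.inl hB0.ne')).const_mul ((n:ℝ)+α)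
    have hDeq : deriv D τ
        = (n:ℝ) * (-(l * 1 * p * (l*τ)^(p-1)) * β * (1 - (l*τ)^p)^(β-1))
          - ((n:ℝ)+α) * (-(1 * p * τ^(p-1)) * β * (1 - τ^p)^(β-1)) :=
      (hd1.sub hd2).deriv
    rw [hDeq]
    -- show the value is negative
    have hmul : (l*τ)^(p-1) = l^(p-1) * τ^(p-1) := Real.mul_rpow hl0.le hτ0.le
    have hlp : l * l^(p-1) = l^p := by
      have h := Real.rpow_add hl0 1 (p-1)
      rw [Real.rpow_one, show (1:ℝ)+(p-1)=p by ring] at h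
      exact h.symm
    have hpowAB : (1 - τ^p)^(β-1) < (1 - (l*τ)^p)^(β-1) :=
      Real.rpow_lt_rpow_of_neg hA0 hAB (by linarith)
    have hBpow : 0 < (1 - τ^p)^(β-1) := Real.rpow_pos_of_pos hB0 _
    have hτpow : 0 < τ^(p-1) := Real.rpow_pos_of_pos hτ0 _
    have hstep : ((n:ℝ)+α) * (1 - τ^p)^(β-1) < (n:ℝ) * l^p * (1 - (l*τ)^p)^(β-1) := by
      calc ((n:ℝ)+α) * (1 - τ^p)^(β-1) ≤ (n:ℝ) * l^p * (1 - τ^p)^(β-1) :=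
            mul_le_mul_of_nonneg_right hkey hBpow.le
        _ < (n:ℝ) * l^p * (1 - (l*τ)^p)^(β-1) := by
            exact mul_lt_mul_of_pos_left hpowAB
              (mul_pos hN0 (Real.rpow_pos_of_pos hl0 _))
    have hexpand : (n:ℝ) * (-(l * 1 * p * (l*τ)^(p-1)) * β * (1 - (l*τ)^p)^(β-1))
          - ((n:ℝ)+α) * (-(1 * p * τ^(p-1)) * β * (1 - τ^p)^(β-1))
        = β * p * τ^(p-1) *
          (((n:ℝ)+α) * (1 - τ^p)^(β-1) - (n:ℝ) * l^p * (1 - (l*τ)^p)^(β-1)) := by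
      rw [hmul, ← hlp]; ring
    rw [hexpand]
    have hpos : 0 < β * p * τ^(p-1) := by positivity
    exact mul_neg_of_pos_of_neg hpos (by linarith)
  have hanti : StrictAntiOn D (Set.Icc a b) :=
    strictAntiOn_of_deriv_neg (convex_Icc a b) hcont.continuousOn hderiv
  have hDD : D b < D a := hanti (Set.left_mem_Icc.mpr hab.le) (Set.right_mem_Icc.mpr hab.le) hab
  -- translate back
  have e1 : ((i:ℝ) - 1) / ((n:ℝ) - 1) = l * a := by
    rw [hl, ha]; field_simp
  have e2 : (i:ℝ) / ((n:ℝ) - 1) = l * b := by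
    rw [hl, hb]; field_simp
  have hgoal : ((n : ℝ) + α) * c α β n i - (n : ℝ) * c α β (n - 1) i
      = (1 / (β * Real.Gamma β)) * (D b - D a) := by
    rw [c, c, hmcast, e1, e2, hD, ha, hb]
    ring
  rw [hgoal]
  exact mul_neg_of_pos_of_neg hK (by linarith)
end

section
/- Fix 0 < α, β < 1 and n ≥ 2. For τ ∈ (0, n−1), the function f(τ,n) = (1 + α/n)·(τ/n)^{α/β−1}·(1 − (τ/n)^{α/β})^{β−1} − (1 + 1/(n−1))·(τ/(n−1))^{α/β−1}·(1 − (τ/(n−1))^{α/β})^{β−1} has no zero, i.e., f(τ,n) < 0 for all τ ∈ (0, n−1). -/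
open Real

theorem stmt_5 (α β : ℝ) (hα : 0 < α) (hα1 : α < 1) (hβ : 0 < β) (hβ1 : β < 1)
    (n : ℕ) (hn : 2 ≤ n) (τ : ℝ) (hτ : τ ∈ Set.Ioo 0 ((n : ℝ) - 1)) :
    (1 + α / n) * (τ / n) ^ (α / β - 1) * (1 - (τ / n) ^ (α / β)) ^ (β - 1)
      - (1 + 1 / ((n : ℝ) - 1)) * (τ / ((n : ℝ) - 1)) ^ (α / β - 1) *
        (1 - (τ / ((n : ℝ) - 1)) ^ (α / β)) ^ (β - 1) < 0 := by
  obtain ⟨hτ0, hτ1⟩ := hτ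
  have hn2 : (2 : ℝ) ≤ (n : ℝ) := by exact_mod_cast hn
  have hnpos : (0 : ℝ) < n := by linarith
  have hm : (0 : ℝ) < (n : ℝ) - 1 := by linarith
  set γ := α / β with hγdef
  have hγ : 0 < γ := div_pos hα hβ
  have hαγ : α ≤ γ := by
    rw [hγdef, le_div_iff₀ hβ]
    nlinarith
  set x := τ / n with hxdef
  set y := τ / ((n : ℝ) - 1) with hydef
  have hx0 : 0 < x := div_pos hτ0 hnpos
  have hy0 : 0 < y := div_pos hτ0 hm
  have hxy : x < y := by
    apply div_lt_div_of_pos_left hτ0 hm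
    linarith
  have hy1 : y < 1 := (div_lt_one hm).2 hτ1
  have hx1 : x < 1 := hxy.trans hy1
  -- powers
  have hxγ : x ^ γ < y ^ γ := Real.rpow_lt_rpow hx0.le hxy hγ
  have hyγ1 : y ^ γ < 1 := Real.rpow_lt_one hy0.le hy1 hγ
  have hbx : 0 < 1 - y ^ γ := by linarith
  have hby : 0 < 1 - x ^ γ := by linarith
  have hQ : (1 - x ^ γ) ^ (β - 1) < (1 - y ^ γ) ^ (β - 1) :=
    Real.rpow_lt_rpow_of_neg hbx (by linarith) (by linarith)
  -- coefficient comparison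
  set c := ((n : ℝ) - 1) / n with hcdef
  have hc0 : 0 < c := div_pos hm hnpos
  have hc1 : c < 1 := (div_lt_one hnpos).2 (by linarith)
  have hxyc : x = y * c := by
    rw [hxdef, hydef, hcdef, div_mul_div_comm, mul_comm τ, mul_div_mul_left _ _ hm.ne']
  have hP : x ^ (γ - 1) = y ^ (γ - 1) * c ^ (γ - 1) := by
    rw [hxyc, Real.mul_rpow hy0.le hc0.le]
  -- Bernoulli: c ^ α ≤ 1 - α / n
  have hber : c ^ α ≤ 1 - α / n := by
    have : c = 1 + (-(1 / (n : ℝ))) := by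
      rw [hcdef]; field_simp; ring
    rw [this]
    have := rpow_one_add_le_one_add_mul_self (s := -(1 / (n : ℝ)))
      (by nlinarith [one_div_pos.2 hnpos]) hα.le hα1.le
    calc (1 + -(1 / (n : ℝ))) ^ α ≤ 1 + α * -(1 / (n : ℝ)) := this
      _ = 1 - α / n := by ring
  have hcγα : c ^ γ ≤ c ^ α := Real.rpow_le_rpow_of_exponent_ge hc0 hc1.le hαγ
  have hαn : 0 < α / n := div_pos hα hnpos
  have hkey : (1 + α / n) * c ^ γ ≤ 1 := by
    have h1 : (1 + α / n) * c ^ γ ≤ (1 + α / n) * (1 - α / n) := by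
      apply mul_le_mul_of_nonneg_left (hcγα.trans hber) (by linarith)
    nlinarith [sq_nonneg (α / n)]
  have hcγ1 : c ^ (γ - 1) = c ^ γ / c := by
    rw [Real.rpow_sub hc0, Real.rpow_one]
  have hAP : (1 + α / n) * x ^ (γ - 1) ≤ (1 + 1 / ((n : ℝ) - 1)) * y ^ (γ - 1) := by
    rw [hP, hcγ1]
    have hyp : 0 < y ^ (γ - 1) := Real.rpow_pos_of_pos hy0 _
    have h2 : (1 + α / n) * (c ^ γ / c) ≤ 1 / c := by
      rw [le_div_iff₀ hc0]
      calc (1 + α / n) * (c ^ γ / c) * c = (1 + α / n) * c ^ γ := by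
            field_simp
        _ ≤ 1 := hkey
    have h3 : (1 : ℝ) / c = 1 + 1 / ((n : ℝ) - 1) := by
      rw [hcdef]; field_simp; ring
    calc (1 + α / n) * (y ^ (γ - 1) * (c ^ γ / c))
        = y ^ (γ - 1) * ((1 + α / n) * (c ^ γ / c)) := by ring
      _ ≤ y ^ (γ - 1) * (1 / c) := mul_le_mul_of_nonneg_left h2 hyp.le
      _ = (1 + 1 / ((n : ℝ) - 1)) * y ^ (γ - 1) := by rw [h3]; ring
  have hAPpos : 0 < (1 + α / n) * x ^ (γ - 1) :=
    mul_pos (by linarith) (Real.rpow_pos_of_pos hx0 _)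
  have hQpos : 0 < (1 - x ^ γ) ^ (β - 1) := Real.rpow_pos_of_pos hby _
  have := mul_lt_mul' hAP hQ hQpos.le (lt_of_lt_of_le hAPpos hAP)
  linarith
end

section
/- For 0 < α, β < 1 and n ≥ 2, the map n ↦ g(n) := n^{α/β}/(n−1)^{α/β} − (n^{α+1}/((n−1)^α (n+α)))^{1/(β−1)} is strictly decreasing in n and tends to 0 as n → ∞; consequently g(n) > 0 for every n > 1. -/
open Real Filter

/-- Auxiliary function in the sign analysis of the discretization coefficients. -/
noncomputable def g (α β : ℝ) (n : ℕ) : ℝ :=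
  (n : ℝ) ^ (α / β) / ((n : ℝ) - 1) ^ (α / β)
    - ((n : ℝ) ^ (α + 1) / (((n : ℝ) - 1) ^ α * ((n : ℝ) + α))) ^ (1 / (β - 1))

namespace StmtSix

/-- `f1 x = log x - log (x-1)`. -/
noncomputable def f1 : ℝ → ℝ := fun x => Real.log x - Real.log (x - 1)

/-- `f2 x = (α+1) log x - α log (x-1) - log (x+α)`. -/
noncomputable def f2 (α : ℝ) : ℝ → ℝ :=
  fun x => (α + 1) * Real.log x - α * Real.log (x - 1) - Real.log (x + α)

lemma hasDerivAt_f2 {α : ℝ} (hα : 0 < α) {x : ℝ} (hx : 1 < x) :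
    HasDerivAt (f2 α) ((α + 1) * x⁻¹ - α * (x - 1)⁻¹ - (x + α)⁻¹) x := by
  have hx0 : x ≠ 0 := by linarith
  have hx1 : x - 1 ≠ 0 := by intro h; nlinarith [sub_eq_zero.mp h]
  have hxα : x + α ≠ 0 := by nlinarith
  have h1 : HasDerivAt (fun y : ℝ => Real.log y) x⁻¹ x := Real.hasDerivAt_log hx0
  have h2 : HasDerivAt (fun y : ℝ => Real.log (y - 1)) ((x - 1)⁻¹) x := by
    have := (Real.hasDerivAt_log hx1).comp x ((hasDerivAt_id x).sub_const 1)
    simpa [Function.comp_def] using this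
  have h3 : HasDerivAt (fun y : ℝ => Real.log (y + α)) ((x + α)⁻¹) x := by
    have := (Real.hasDerivAt_log hxα).comp x ((hasDerivAt_id x).add_const α)
    simpa [Function.comp_def] using this
  exact ((h1.const_mul (α + 1)).sub (h2.const_mul α)).sub h3

lemma f2_anti {α : ℝ} (hα : 0 < α) : StrictAntiOn (f2 α) (Set.Ici (2 : ℝ)) := by
  apply strictAntiOn_of_deriv_neg (convex_Ici 2)
  · intro x hx
    have hx' : (1 : ℝ) < x := by simpa using lt_of_lt_of_le one_lt_two hx
    exact (hasDerivAt_f2 hα hx').continuousAt.continuousWithinAt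
  · intro x hx
    rw [interior_Ici] at hx
    have hx' : (1 : ℝ) < x := lt_trans one_lt_two hx
    rw [(hasDerivAt_f2 hα hx').deriv]
    have hx0 : (0 : ℝ) < x := by linarith
    have hx1 : (0 : ℝ) < x - 1 := by linarith
    have hxα : (0 : ℝ) < x + α := by linarith
    have key : (α + 1) * x⁻¹ - α * (x - 1)⁻¹ - (x + α)⁻¹
        = -(α * (α + 1)) / (x * (x - 1) * (x + α)) := by
      field_simp
      ring
    rw [key]
    apply div_neg_of_neg_of_pos
    · nlinarith
    · positivity

lemma f1_anti : StrictAntiOn f1 (Set.Ici (2 : ℝ)) := by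
  intro x hx y hy hxy
  have hx2 : (2 : ℝ) ≤ x := hx
  have hy2 : (2 : ℝ) ≤ y := hy
  have hx1 : (0 : ℝ) < x - 1 := by linarith
  have hy1 : (0 : ℝ) < y - 1 := by linarith
  have hx0 : (0 : ℝ) < x := by linarith
  have hy0 : (0 : ℝ) < y := by linarith
  have hdiv : y / (y - 1) < x / (x - 1) := by
    rw [div_lt_div_iff₀ hy1 hx1]
    nlinarith
  have hpos : (0 : ℝ) < y / (y - 1) := by positivity
  have := Real.log_lt_log hpos hdiv
  rwa [Real.log_div hy0.ne' hy1.ne', Real.log_div hx0.ne' hx1.ne'] at this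

/-- Bridge: the value of `g` in exponential form. -/
lemma g_eq {α β : ℝ} (hα : 0 < α) (n : ℕ) (hn : 2 ≤ n) :
    g α β n = Real.exp (α / β * f1 n) - Real.exp (1 / (β - 1) * f2 α n) := by
  have hx2 : (2 : ℝ) ≤ (n : ℝ) := by exact_mod_cast hn
  have hx0 : (0 : ℝ) < (n : ℝ) := by linarith
  have hx1 : (0 : ℝ) < (n : ℝ) - 1 := by linarith
  have hxα : (0 : ℝ) < (n : ℝ) + α := by linarith
  have hbase : (0 : ℝ) < (n : ℝ) ^ (α + 1) / (((n : ℝ) - 1) ^ α * ((n : ℝ) + α)) := by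
    positivity
  unfold g f1 f2
  rw [Real.rpow_def_of_pos hx0 (α / β), Real.rpow_def_of_pos hx1 (α / β), ← Real.exp_sub,
    Real.rpow_def_of_pos hbase,
    Real.log_div (by positivity) (by positivity),
    Real.log_mul (by positivity) hxα.ne',
    Real.log_rpow hx0, Real.log_rpow hx1]
  ring_nf

lemma tendsto_log_ratio (c : ℝ) :
    Tendsto (fun n : ℕ => Real.log (n : ℝ) - Real.log ((n : ℝ) + c)) atTop (nhds 0) := by
  have hA : Tendsto (fun n : ℕ => (n : ℝ) + c) atTop atTop :=
    tendsto_atTop_add_const_right _ c tendsto_natCast_atTop_atTop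
  have h0 : Tendsto (fun n : ℕ => c / ((n : ℝ) + c)) atTop (nhds 0) :=
    Tendsto.div_atTop tendsto_const_nhds hA
  have hratio : Tendsto (fun n : ℕ => (n : ℝ) / ((n : ℝ) + c)) atTop (nhds 1) := by
    have h1 : Tendsto (fun n : ℕ => 1 - c / ((n : ℝ) + c)) atTop (nhds 1) := by
      simpa using tendsto_const_nhds.sub h0
    apply h1.congr'
    filter_upwards [hA.eventually_gt_atTop 0] with n hn
    field_simp
    ring
  have hcomp : Tendsto (fun n : ℕ => Real.log ((n : ℝ) / ((n : ℝ) + c))) atTop (nhds 0) := by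
    have := (Real.continuousAt_log one_ne_zero).tendsto.comp hratio
    simpa [Function.comp_def] using this
  apply hcomp.congr'
  filter_upwards [hA.eventually_gt_atTop 0, tendsto_natCast_atTop_atTop.eventually_gt_atTop (0 : ℝ)]
    with n hn hn'
  exact Real.log_div hn'.ne' hn.ne'

lemma f1_tendsto : Tendsto (fun n : ℕ => f1 n) atTop (nhds 0) := by
  have := tendsto_log_ratio (-1)
  apply this.congr
  intro n
  simp [f1, sub_eq_add_neg]

lemma f2_tendsto {α : ℝ} : Tendsto (fun n : ℕ => f2 α n) atTop (nhds 0) := by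
  have h1 := tendsto_log_ratio (-1)
  have h2 := tendsto_log_ratio α
  have := (h1.const_mul α).add h2
  rw [mul_zero, add_zero] at this
  apply this.congr
  intro n
  simp only [f2, sub_eq_add_neg]
  ring_nf

end StmtSix

open StmtSix in
theorem stmt_6 (α β : ℝ) (hα : 0 < α) (hα1 : α < 1) (hβ : 0 < β) (hβ1 : β < 1) :
    StrictAntiOn (g α β) {n : ℕ | 2 ≤ n} ∧
      Filter.Tendsto (g α β) Filter.atTop (nhds 0) ∧
      ∀ n : ℕ, 1 < n → 0 < g α β n := by
  have hc1 : 0 < α / β := by positivity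
  have hc2 : 1 / (β - 1) < 0 := by
    apply div_neg_of_pos_of_neg one_pos; linarith
  have hanti : StrictAntiOn (g α β) {n : ℕ | 2 ≤ n} := by
    intro m hm n hn hmn
    simp only [Set.mem_setOf_eq] at hm hn
    have hmr : (2 : ℝ) ≤ (m : ℝ) := by exact_mod_cast hm
    have hnr : (2 : ℝ) ≤ (n : ℝ) := by exact_mod_cast hn
    have hmnr : (m : ℝ) < (n : ℝ) := by exact_mod_cast hmn
    rw [g_eq hα m hm, g_eq hα n hn]
    have hA : Real.exp (α / β * f1 n) < Real.exp (α / β * f1 m) := by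
      apply Real.exp_lt_exp.mpr
      exact mul_lt_mul_of_pos_left (f1_anti hmr hnr hmnr) hc1
    have hB : Real.exp (1 / (β - 1) * f2 α m) < Real.exp (1 / (β - 1) * f2 α n) := by
      apply Real.exp_lt_exp.mpr
      exact mul_lt_mul_of_neg_left (f2_anti hα hmr hnr hmnr) hc2
    linarith
  have htend : Filter.Tendsto (g α β) Filter.atTop (nhds 0) := by
    have hE : Tendsto (fun n : ℕ =>
        Real.exp (α / β * f1 n) - Real.exp (1 / (β - 1) * f2 α n)) atTop (nhds 0) := by
      have t1 : Tendsto (fun n : ℕ => Real.exp (α / β * f1 n)) atTop (nhds 1) := by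
        have := Real.continuous_exp.continuousAt.tendsto.comp
          ((f1_tendsto).const_mul (α / β))
        simpa [Function.comp_def] using this
      have t2 : Tendsto (fun n : ℕ => Real.exp (1 / (β - 1) * f2 α n)) atTop (nhds 1) := by
        have := Real.continuous_exp.continuousAt.tendsto.comp
          ((f2_tendsto (α := α)).const_mul (1 / (β - 1)))
        simpa [Function.comp_def] using this
      simpa using t1.sub t2
    apply hE.congr'
    filter_upwards [eventually_ge_atTop 2] with n hn
    exact (g_eq hα n hn).symm
  refine ⟨hanti, htend, ?_⟩
  intro n hn
  have hn2 : 2 ≤ n := hn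
  have h1 : g α β (n + 1) < g α β n :=
    hanti (by simpa using hn2) (by simp only [Set.mem_setOf_eq]; omega) (by omega)
  have h2 : 0 ≤ g α β (n + 1) := by
    apply le_of_tendsto htend
    filter_upwards [eventually_ge_atTop (n + 1)] with m hm
    rcases eq_or_lt_of_le hm with h | h
    · rw [h]
    · exact le_of_lt (hanti (by simp only [Set.mem_setOf_eq]; omega)
        (by simp only [Set.mem_setOf_eq]; omega) h)
  linarith
end

section
/- The Hermite functions Ĥ_n(x) := π^{−1/4}(2^n n!)^{−1/2} e^{−x²/2} H_n(x), where H_n is the physicists' Hermite polynomial, satisfy ∫_{−∞}^{∞} Ĥ_n'(x) Ĥ_m'(x) dx = −√(n(n−1))/2 if m = n−2, n + 1/2 if m = n, −√((n+2)(n+1))/2 if m = n+2, and 0 otherwise. -/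
/-- Physicists' Hermite polynomial function via Rodrigues' formula. -/
noncomputable def hermiteFn (n : ℕ) (x : ℝ) : ℝ :=
  (-1) ^ n * Real.exp (x ^ 2) * iteratedDeriv n (fun y => Real.exp (-y ^ 2)) x

/-- Normalized Hermite functions. -/
noncomputable def hermiteHat (n : ℕ) (x : ℝ) : ℝ :=
  Real.pi ^ (-(1 / 4) : ℝ) * ((2 ^ n * n.factorial : ℝ)) ^ (-(1 / 2) : ℝ) *
    Real.exp (-x ^ 2 / 2) * hermiteFn n x


open Real MeasureTheory Filter Polynomial

noncomputable def Pher : ℕ → Polynomial ℝ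
  | 0 => 1
  | n+1 => 2 * Polynomial.X * Pher n - Polynomial.derivative (Pher n)

noncomputable def Gg : ℝ → ℝ := fun y => Real.exp (-y ^ 2)

lemma contDiff_Gg : ContDiff ℝ ⊤ Gg :=
  Real.contDiff_exp.comp ((contDiff_id.pow 2).neg)

lemma hasDerivAt_gg (k : ℕ) (x : ℝ) :
    HasDerivAt (iteratedDeriv k Gg) (iteratedDeriv (k+1) Gg x) x := by
  have h1 : DifferentiableAt ℝ (iteratedDeriv k Gg) x :=
    (contDiff_Gg.differentiable_iteratedDeriv k (by simp)).differentiableAt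
  rw [iteratedDeriv_succ]
  exact h1.hasDerivAt

lemma eval_Pher_succ (n : ℕ) (x : ℝ) :
    (Pher (n+1)).eval x = 2*x*(Pher n).eval x - (derivative (Pher n)).eval x := by
  simp [Pher]

lemma eval_deriv_Pher_succ : ∀ (n : ℕ) (x : ℝ),
    (derivative (Pher (n+1))).eval x = 2*((n:ℝ)+1) * (Pher n).eval x := by
  intro n
  induction n with
  | zero => intro x; simp [Pher]
  | succ j ih =>
    intro x
    have hder : (fun y => (derivative (Pher (j+1))).eval y)
        = (fun y => 2*((j:ℝ)+1) * (Pher j).eval y) := funext ih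
    have h2 : (derivative (derivative (Pher (j+1)))).eval x
        = 2*((j:ℝ)+1) * (derivative (Pher j)).eval x := by
      rw [← Polynomial.deriv, hder]
      exact (((Pher j).hasDerivAt x).const_mul _).deriv
    have h3 : Pher (j+2) = 2 * X * Pher (j+1) - derivative (Pher (j+1)) := rfl
    have h5 : (derivative (Pher (j+2))).eval x = 2 * (Pher (j+1)).eval x
        + 2*x*(derivative (Pher (j+1))).eval x
        - (derivative (derivative (Pher (j+1)))).eval x := by
      rw [h3, derivative_sub, derivative_mul, derivative_mul]
      simp
    have h4 := eval_Pher_succ j x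
    rw [h5, ih, h2]
    push_cast
    linear_combination (-2*(j:ℝ)-2) * h4

lemma deriv_Pher_succ (n : ℕ) :
    derivative (Pher (n+1)) = Polynomial.C (2*((n:ℝ)+1)) * Pher n := by
  apply Polynomial.funext
  intro x
  rw [eval_deriv_Pher_succ]
  simp

lemma neg_one_pow_cancel (k : ℕ) (a : ℝ) : (-1:ℝ)^k * ((-1:ℝ)^k * a) = a := by
  rw [← mul_assoc, ← pow_add, Even.neg_one_pow ⟨k, rfl⟩, one_mul]

lemma gg_eq (n : ℕ) : ∀ x : ℝ, iteratedDeriv n Gg x = (-1)^n * (Pher n).eval x * Real.exp (-x^2) := by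
  induction n with
  | zero => intro x; simp [Gg, Pher]
  | succ k ih =>
    intro x
    have hfun : iteratedDeriv k Gg = fun y => (-1:ℝ)^k * (Pher k).eval y * Real.exp (-y^2) :=
      funext ih
    rw [iteratedDeriv_succ, hfun]
    have hexp : HasDerivAt (fun y : ℝ => Real.exp (-y^2)) (Real.exp (-x^2) * -(2*x)) x := by
      have hin : HasDerivAt (fun y : ℝ => -y^2) (-(2*x)) x := by
        simpa using (hasDerivAt_pow 2 x).fun_neg
      exact hin.exp
    have h := ((((Pher k).hasDerivAt x).fun_mul hexp).const_mul ((-1:ℝ)^k))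
    have h2 : (fun y => (-1:ℝ)^k * ((Pher k).eval y * Real.exp (-y^2)))
        = fun y => (-1:ℝ)^k * (Pher k).eval y * Real.exp (-y^2) := by
      funext y; ring
    rw [h2] at h
    rw [h.deriv]
    rw [eval_Pher_succ]
    ring

lemma hermiteFn_eq (n : ℕ) (x : ℝ) : hermiteFn n x = (Pher n).eval x := by
  have hg : (fun y => Real.exp (-y ^ 2)) = Gg := rfl
  rw [hermiteFn, hg, gg_eq]
  have h1 : Real.exp (x^2) * Real.exp (-x^2) = 1 := by
    rw [← Real.exp_add]; simp
  calc (-1:ℝ)^n * Real.exp (x^2) * ((-1)^n * (Pher n).eval x * Real.exp (-x^2))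
      = ((-1:ℝ)^n * ((-1:ℝ)^n * 1)) * (Real.exp (x^2) * Real.exp (-x^2)) * (Pher n).eval x := by
        ring
    _ = (Pher n).eval x := by rw [h1, neg_one_pow_cancel]; ring

lemma integrable_poly_gauss (Q : Polynomial ℝ) :
    Integrable (fun x : ℝ => Q.eval x * Real.exp (-x^2)) := by
  have h : ∀ k : ℕ, Integrable (fun x : ℝ => x^k * Real.exp (-x^2)) := by
    intro k
    have hk : (-1:ℝ) < (k:ℝ) := lt_of_lt_of_le neg_one_lt_zero (Nat.cast_nonneg k)
    have := integrable_rpow_mul_exp_neg_mul_sq (b := 1) one_pos hk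
    simpa [Real.rpow_natCast] using this
  have heq : (fun x : ℝ => Q.eval x * Real.exp (-x^2))
      = fun x => ∑ i ∈ Finset.range (Q.natDegree+1), Q.coeff i * (x^i * Real.exp (-x^2)) := by
    funext x
    rw [Polynomial.eval_eq_sum_range, Finset.sum_mul]
    simp [mul_assoc]
  rw [heq]
  exact integrable_finset_sum _ (fun i _ => ((h i).const_mul (Q.coeff i)))

noncomputable def Kint (Q : Polynomial ℝ) : ℝ := ∫ x : ℝ, Q.eval x * Real.exp (-x^2)

lemma Kint_add (Q1 Q2 : Polynomial ℝ) : Kint (Q1 + Q2) = Kint Q1 + Kint Q2 := by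
  unfold Kint
  simp only [eval_add, add_mul]
  exact integral_add (integrable_poly_gauss Q1) (integrable_poly_gauss Q2)

lemma Kint_smul (a : ℝ) (Q : Polynomial ℝ) : Kint (Polynomial.C a * Q) = a * Kint Q := by
  unfold Kint
  simp only [eval_mul, eval_C, mul_assoc]
  exact integral_const_mul a _

lemma Kint_neg (Q : Polynomial ℝ) : Kint (-Q) = - Kint Q := by
  have : (-Q : Polynomial ℝ) = Polynomial.C (-1) * Q := by ring_nf; simp
  rw [this, Kint_smul]; ring

lemma Kint_sub (Q1 Q2 : Polynomial ℝ) : Kint (Q1 - Q2) = Kint Q1 - Kint Q2 := by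
  rw [sub_eq_add_neg, Kint_add, Kint_neg]; ring

lemma Kint_ibp (n m : ℕ) : Kint (Pher (n+1) * Pher m) = Kint (derivative (Pher m) * Pher n) := by
  set u : ℝ → ℝ := fun x => (-1:ℝ)^(n+1) * (Pher m).eval x with hu_def
  set u' : ℝ → ℝ := fun x => (-1:ℝ)^(n+1) * (derivative (Pher m)).eval x with hu'_def
  set v : ℝ → ℝ := iteratedDeriv n Gg with hv_def
  set v' : ℝ → ℝ := iteratedDeriv (n+1) Gg with hv'_def
  have hu : ∀ x, HasDerivAt u (u' x) x := fun x => ((Pher m).hasDerivAt x).const_mul _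
  have hv : ∀ x, HasDerivAt v (v' x) x := hasDerivAt_gg n
  have e1 : u * v' = fun x => (Pher (n+1) * Pher m).eval x * Real.exp (-x^2) := by
    funext x
    simp only [Pi.mul_apply, hu_def, hv'_def, gg_eq, eval_mul]
    rw [show (-1:ℝ)^(n+1) * (Pher m).eval x * ((-1)^(n+1) * (Pher (n+1)).eval x * Real.exp (-x^2))
        = (-1:ℝ)^(n+1) * ((-1:ℝ)^(n+1) * ((Pher (n+1)).eval x * (Pher m).eval x * Real.exp (-x^2))) by ring,
      neg_one_pow_cancel]
  have e2 : u' * v = fun x => -((derivative (Pher m) * Pher n).eval x * Real.exp (-x^2)) := by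
    funext x
    simp only [Pi.mul_apply, hu'_def, hv_def, gg_eq, eval_mul]
    rw [show (-1:ℝ)^(n+1) * (derivative (Pher m)).eval x * ((-1)^n * (Pher n).eval x * Real.exp (-x^2))
        = -((-1:ℝ)^n * ((-1:ℝ)^n * ((derivative (Pher m)).eval x * (Pher n).eval x * Real.exp (-x^2)))) by
          rw [pow_succ]; ring,
      neg_one_pow_cancel]
  have e3 : u * v = fun x => -((Pher n * Pher m).eval x * Real.exp (-x^2)) := by
    funext x
    simp only [Pi.mul_apply, hu_def, hv_def, gg_eq, eval_mul]
    rw [show (-1:ℝ)^(n+1) * (Pher m).eval x * ((-1)^n * (Pher n).eval x * Real.exp (-x^2))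
        = -((-1:ℝ)^n * ((-1:ℝ)^n * ((Pher n).eval x * (Pher m).eval x * Real.exp (-x^2)))) by
          rw [pow_succ]; ring,
      neg_one_pow_cancel]
  have hi1 : Integrable (u * v') := by rw [e1]; exact integrable_poly_gauss _
  have hi2 : Integrable (u' * v) := by
    rw [e2]
    exact (integrable_poly_gauss (derivative (Pher m) * Pher n)).neg
  have hi3 : Integrable (u * v) := by rw [e3]; exact (integrable_poly_gauss _).neg
  have key := MeasureTheory.integral_mul_deriv_eq_deriv_mul_of_integrable (fun x _ => hu x) (fun x _ => hv x) hi1 hi2 hi3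
  have l1 : (∫ x : ℝ, u x * v' x) = Kint (Pher (n+1) * Pher m) := by
    unfold Kint
    exact congrArg (MeasureTheory.integral MeasureTheory.volume) e1
  have l2 : (∫ x : ℝ, u' x * v x) = - Kint (derivative (Pher m) * Pher n) := by
    unfold Kint
    rw [(show (∫ x : ℝ, u' x * v x) = ∫ x : ℝ, -((derivative (Pher m) * Pher n).eval x * Real.exp (-x^2))
      from congrArg (MeasureTheory.integral MeasureTheory.volume) e2), integral_neg]
  rw [l1, l2] at key
  simpa using key

lemma Kint_succ_succ (n m : ℕ) :
    Kint (Pher (n+1) * Pher (m+1)) = (2*((m:ℝ)+1)) * Kint (Pher n * Pher m) := by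
  rw [Kint_ibp, deriv_Pher_succ, mul_assoc, Kint_smul, mul_comm (Pher m)]

lemma Kint_comm (n m : ℕ) : Kint (Pher n * Pher m) = Kint (Pher m * Pher n) := by
  rw [mul_comm]

lemma Kint_succ_zero (n : ℕ) : Kint (Pher (n+1) * Pher 0) = 0 := by
  rw [Kint_ibp]
  have : derivative (Pher 0) = 0 := by simp [Pher]
  rw [this, zero_mul]
  simp [Kint]

lemma Kint_diag (n : ℕ) : Kint (Pher n * Pher n) = 2^n * (n.factorial : ℝ) * Real.sqrt π := by
  induction n with
  | zero =>
    simp only [Pher, pow_zero, Nat.factorial_zero, Nat.cast_one, one_mul, mul_one]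
    unfold Kint
    rw [show √π = √(π/1) by rw [div_one]]
    rw [← integral_gaussian 1]
    congr 1; funext x; simp
  | succ k ih =>
    rw [Kint_succ_succ, ih, Nat.factorial_succ]
    push_cast
    ring

lemma Kint_offdiag : ∀ n m : ℕ, n ≠ m → Kint (Pher n * Pher m) = 0 := by
  intro n
  induction n with
  | zero =>
    intro m hm
    match m, hm with
    | (k+1), _ => rw [Kint_comm, Kint_succ_zero]
  | succ j ih =>
    intro m hm
    match m, hm with
    | 0, _ => exact Kint_succ_zero j
    | (k+1), hm =>
      rw [Kint_succ_succ, ih k (by omega)]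
      ring

noncomputable def cc (n : ℕ) : ℝ :=
  Real.pi ^ (-(1 / 4) : ℝ) * ((2 ^ n * n.factorial : ℝ)) ^ (-(1 / 2) : ℝ)

lemma hermiteHat_eq (n : ℕ) (x : ℝ) :
    hermiteHat n x = cc n * (Real.exp (-x^2/2) * (Pher n).eval x) := by
  rw [hermiteHat, hermiteFn_eq, cc]
  ring

noncomputable def Qq (n : ℕ) : Polynomial ℝ :=
  Polynomial.C (2*(n:ℝ)) * Pher (n-1) - Pher (n+1)

lemma eval_Qq (n : ℕ) (x : ℝ) :
    (Qq n).eval x = 2 * ((derivative (Pher n)).eval x - x * (Pher n).eval x) := by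
  cases n with
  | zero => simp [Qq, Pher]
  | succ k =>
    have h1 : (Qq (k+1)).eval x = 2*((k:ℝ)+1) * (Pher k).eval x - (Pher (k+2)).eval x := by
      simp [Qq]
    rw [h1, eval_Pher_succ (k+1) x, eval_deriv_Pher_succ k x]
    ring

lemma hasDerivAt_hermiteHat (n : ℕ) (x : ℝ) :
    HasDerivAt (hermiteHat n)
      (cc n * (Real.exp (-x^2/2) * (-x) * (Pher n).eval x
        + Real.exp (-x^2/2) * (derivative (Pher n)).eval x)) x := by
  have hin : HasDerivAt (fun y : ℝ => -y^2/2) (-x) x := by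
    exact ((hasDerivAt_pow 2 x).fun_neg.div_const 2).congr_deriv (by norm_num; ring)
  have hexp : HasDerivAt (fun y : ℝ => Real.exp (-y^2/2)) (Real.exp (-x^2/2) * (-x)) x := hin.exp
  have h := ((hexp.fun_mul ((Pher n).hasDerivAt x)).const_mul (cc n))
  have hfun : (fun y => cc n * (Real.exp (-y^2/2) * (Pher n).eval y)) = hermiteHat n :=
    funext fun y => (hermiteHat_eq n y).symm
  rw [hfun] at h
  convert h using 1
  try ring

lemma deriv_hermiteHat (n : ℕ) (x : ℝ) :
    deriv (hermiteHat n) x = cc n / 2 * (Real.exp (-x^2/2) * (Qq n).eval x) := by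
  rw [(hasDerivAt_hermiteHat n x).deriv, eval_Qq]
  ring

lemma Kexpand (a b : ℝ) (A1 B1 A2 B2 : Polynomial ℝ) :
    Kint ((Polynomial.C a * A1 - B1) * (Polynomial.C b * A2 - B2))
      = a*b*Kint (A1*A2) - a*Kint (A1*B2) - b*Kint (B1*A2) + Kint (B1*B2) := by
  have h : (Polynomial.C a * A1 - B1) * (Polynomial.C b * A2 - B2)
      = (Polynomial.C a * (Polynomial.C b * (A1*A2)) - Polynomial.C a * (A1*B2))
        - (Polynomial.C b * (B1*A2) - (B1*B2)) := by ring
  rw [h, Kint_sub, Kint_sub, Kint_sub, Kint_smul, Kint_smul, Kint_smul, Kint_smul]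
  ring

lemma main_integral (n m : ℕ) :
    (∫ x : ℝ, deriv (hermiteHat n) x * deriv (hermiteHat m) x)
      = (cc n * cc m / 4) *
        ((2*(n:ℝ))*(2*(m:ℝ)) * Kint (Pher (n-1) * Pher (m-1))
          - (2*(n:ℝ)) * Kint (Pher (n-1) * Pher (m+1))
          - (2*(m:ℝ)) * Kint (Pher (n+1) * Pher (m-1))
          + Kint (Pher (n+1) * Pher (m+1))) := by
  have hE : ∀ x : ℝ, Real.exp (-x^2/2) * Real.exp (-x^2/2) = Real.exp (-x^2) := by
    intro x; rw [← Real.exp_add]; ring_nf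
  have e : (fun x : ℝ => deriv (hermiteHat n) x * deriv (hermiteHat m) x)
      = fun x => (cc n * cc m / 4) * ((Qq n * Qq m).eval x * Real.exp (-x^2)) := by
    funext x
    rw [deriv_hermiteHat, deriv_hermiteHat, eval_mul]
    linear_combination (cc n * cc m / 4 * ((Qq n).eval x) * ((Qq m).eval x)) * hE x
  rw [e, integral_const_mul]
  rw [show (∫ x : ℝ, (Qq n * Qq m).eval x * Real.exp (-x^2)) = Kint (Qq n * Qq m) from rfl]
  rw [show Qq n * Qq m = (Polynomial.C (2*(n:ℝ)) * Pher (n-1) - Pher (n+1))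
      * (Polynomial.C (2*(m:ℝ)) * Pher (m-1) - Pher (m+1)) from rfl]
  rw [Kexpand]

lemma cc_sq (k : ℕ) : cc k * cc k = (Real.sqrt π)⁻¹ * ((2^k * (k.factorial:ℝ)))⁻¹ := by
  unfold cc
  have hA : (0:ℝ) < 2^k * k.factorial := by positivity
  rw [show Real.pi ^ (-(1/4):ℝ) * ((2^k * k.factorial:ℝ)) ^ (-(1/2):ℝ)
      * (Real.pi ^ (-(1/4):ℝ) * ((2^k * k.factorial:ℝ)) ^ (-(1/2):ℝ))
      = (Real.pi ^ (-(1/4):ℝ) * Real.pi ^ (-(1/4):ℝ))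
        * (((2^k * k.factorial:ℝ)) ^ (-(1/2):ℝ) * ((2^k * k.factorial:ℝ)) ^ (-(1/2):ℝ)) by ring]
  rw [← Real.rpow_add pi_pos, ← Real.rpow_add hA]
  rw [show (-(1/4):ℝ) + (-(1/4)) = -(1/2) by norm_num,
    show (-(1/2):ℝ) + (-(1/2)) = -1 by norm_num]
  rw [Real.rpow_neg_one, Real.rpow_neg pi_pos.le, ← Real.sqrt_eq_rpow]

lemma cc_pair (k : ℕ) : cc k * cc (k+2)
    = (Real.sqrt π)⁻¹ * (2^(k+1) * (k.factorial:ℝ) * Real.sqrt (((k:ℝ)+1)*((k:ℝ)+2)))⁻¹ := by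
  unfold cc
  have hA : (0:ℝ) ≤ 2^k * k.factorial := by positivity
  have hB : (0:ℝ) ≤ 2^(k+2) * (k+2).factorial := by positivity
  rw [show Real.pi ^ (-(1/4):ℝ) * ((2^k * k.factorial:ℝ)) ^ (-(1/2):ℝ)
      * (Real.pi ^ (-(1/4):ℝ) * ((2^(k+2) * (k+2).factorial:ℝ)) ^ (-(1/2):ℝ))
      = (Real.pi ^ (-(1/4):ℝ) * Real.pi ^ (-(1/4):ℝ))
        * (((2^k * k.factorial:ℝ)) ^ (-(1/2):ℝ) * ((2^(k+2) * (k+2).factorial:ℝ)) ^ (-(1/2):ℝ)) by ring]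
  rw [← Real.rpow_add pi_pos, ← Real.mul_rpow hA hB]
  rw [show (-(1/4):ℝ) + (-(1/4)) = -(1/2) by norm_num]
  rw [show (2^k * (k.factorial:ℝ)) * (2^(k+2) * ((k+2).factorial:ℝ))
      = (2^(k+1) * (k.factorial:ℝ))^2 * (((k:ℝ)+1)*((k:ℝ)+2)) by
    push_cast [Nat.factorial_succ]
    ring]
  rw [Real.rpow_neg pi_pos.le, Real.rpow_neg (by positivity), ← Real.sqrt_eq_rpow,
    ← Real.sqrt_eq_rpow, Real.sqrt_mul (sq_nonneg _), Real.sqrt_sq (by positivity)]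

theorem stmt_14 (n m : ℕ) :
    (∫ x : ℝ, deriv (hermiteHat n) x * deriv (hermiteHat m) x) =
      if m + 2 = n then -Real.sqrt ((n : ℝ) * ((n : ℝ) - 1)) / 2
      else if m = n then (n : ℝ) + 1 / 2
      else if m = n + 2 then -Real.sqrt (((n : ℝ) + 2) * ((n : ℝ) + 1)) / 2
      else 0 := by
  rw [main_integral]
  have hπ : (0:ℝ) < Real.sqrt π := Real.sqrt_pos.mpr pi_pos
  by_cases h1 : m + 2 = n
  · subst h1
    rw [if_pos rfl]
    have K1 : Kint (Pher (m+2-1) * Pher (m-1)) = 0 := Kint_offdiag _ _ (by omega)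
    have K2 : Kint (Pher (m+2-1) * Pher (m+1)) = 2^(m+1) * ((m+1).factorial:ℝ) * Real.sqrt π :=
      Kint_diag (m+1)
    have K3 : Kint (Pher (m+2+1) * Pher (m-1)) = 0 := Kint_offdiag _ _ (by omega)
    have K4 : Kint (Pher (m+2+1) * Pher (m+1)) = 0 := Kint_offdiag _ _ (by omega)
    rw [K1, K2, K3, K4]
    have hcc : cc (m+2) * cc m
        = (Real.sqrt π)⁻¹ * (2^(m+1) * (m.factorial:ℝ) * Real.sqrt (((m:ℝ)+1)*((m:ℝ)+2)))⁻¹ := by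
      rw [mul_comm]; exact cc_pair m
    rw [hcc]
    set t := Real.sqrt (((m:ℝ)+1)*((m:ℝ)+2)) with ht_def
    have ht : t*t = ((m:ℝ)+1)*((m:ℝ)+2) := Real.mul_self_sqrt (by positivity)
    have htpos : 0 < t := Real.sqrt_pos.mpr (by positivity)
    have hrhs : Real.sqrt ((↑(m+2):ℝ)*((↑(m+2):ℝ)-1)) = t := by
      rw [ht_def]
      push_cast
      rw [show ((m:ℝ)+2)*((m:ℝ)+2-1) = ((m:ℝ)+1)*((m:ℝ)+2) by ring]
    rw [hrhs]
    have hfac : (0:ℝ) < m.factorial := by positivity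
    push_cast [Nat.factorial_succ]
    field_simp
    linear_combination (8 * (2:ℝ)^m * (m.factorial:ℝ) * Real.sqrt π) * ht
  · rw [if_neg h1]
    by_cases h2 : m = n
    · subst h2
      rw [if_pos rfl]
      have K2 : Kint (Pher (m-1) * Pher (m+1)) = 0 := Kint_offdiag _ _ (by omega)
      have K3 : Kint (Pher (m+1) * Pher (m-1)) = 0 := Kint_offdiag _ _ (by omega)
      rw [K2, K3, Kint_diag, Kint_diag]
      rw [cc_sq]
      cases m with
      | zero =>
        norm_num
        field_simp
        ring
      | succ k =>
        have hk1 : k + 1 - 1 = k := rfl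
        rw [hk1]
        push_cast [Nat.factorial_succ, pow_succ]
        field_simp
        ring
    · rw [if_neg h2]
      by_cases h3 : m = n + 2
      · subst h3
        rw [if_pos rfl]
        have K1 : Kint (Pher (n-1) * Pher (n+2-1)) = 0 := Kint_offdiag _ _ (by omega)
        have K2 : Kint (Pher (n-1) * Pher (n+2+1)) = 0 := Kint_offdiag _ _ (by omega)
        have K3 : Kint (Pher (n+1) * Pher (n+2-1)) = 2^(n+1) * ((n+1).factorial:ℝ) * Real.sqrt π :=
          Kint_diag (n+1)
        have K4 : Kint (Pher (n+1) * Pher (n+2+1)) = 0 := Kint_offdiag _ _ (by omega)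
        rw [K1, K2, K3, K4, cc_pair]
        set t := Real.sqrt (((n:ℝ)+1)*((n:ℝ)+2)) with ht_def
        have ht : t*t = ((n:ℝ)+1)*((n:ℝ)+2) := Real.mul_self_sqrt (by positivity)
        have htpos : 0 < t := Real.sqrt_pos.mpr (by positivity)
        have hrhs : Real.sqrt (((n:ℝ)+2)*((n:ℝ)+1)) = t := by
          rw [ht_def, mul_comm]
        rw [hrhs]
        have hfac : (0:ℝ) < n.factorial := by positivity
        push_cast [Nat.factorial_succ]
        field_simp
        linear_combination (8 * (2:ℝ)^n * (n.factorial:ℝ) * Real.sqrt π) * ht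
      · rw [if_neg h3]
        have T1 : (2*(n:ℝ))*(2*(m:ℝ)) * Kint (Pher (n-1) * Pher (m-1)) = 0 := by
          rcases Nat.eq_zero_or_pos n with h | h
          · subst h; push_cast; ring
          rcases Nat.eq_zero_or_pos m with h' | h'
          · subst h'; push_cast; ring
          · rw [Kint_offdiag _ _ (by omega)]; ring
        have T2 : (2*(n:ℝ)) * Kint (Pher (n-1) * Pher (m+1)) = 0 := by
          rcases Nat.eq_zero_or_pos n with h | h
          · subst h; push_cast; ring
          · rw [Kint_offdiag _ _ (by omega)]; ring
        have T3 : (2*(m:ℝ)) * Kint (Pher (n+1) * Pher (m-1)) = 0 := by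
          rcases Nat.eq_zero_or_pos m with h | h
          · subst h; push_cast; ring
          · rw [Kint_offdiag _ _ (by omega)]; ring
        have T4 : Kint (Pher (n+1) * Pher (m+1)) = 0 := Kint_offdiag _ _ (by omega)
        linear_combination (cc n * cc m / 4) * (T1 - T2 - T3 + T4)
end
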